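/- Any two integer parts of an ordered field are isomorphic as ordered sets; in particular they have the same cardinality. -/

import Mathlib

/-- `I` is an integer part of the ordered field `K`: a discretely ordered subring
(`1` is the least positive element) such that every `a ∈ K` satisfies
`r ≤ a < r + 1` for some `r ∈ I`. -/
def Subring.IsIntegerPart {K : Type*} [Field K] [LinearOrder K] [IsStrictOrderedRing K] (I : Subring K) : Prop :=
  (∀ r ∈ I, 0 < r → 1 ≤ r) ∧ (∀ a : K, ∃ r ∈ I, r ≤ a ∧ a < r + 1)

namespace IntPartAux

variable {K : Type*} [Field K] [LinearOrder K] [IsStrictOrderedRing K]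

/-- Elements of a discretely ordered subring bounded by a natural number are naturals. -/
lemma nat_of_bounded (I : Subring K) (hd : ∀ r ∈ I, 0 < r → 1 ≤ r) :
    ∀ n : ℕ, ∀ x : K, x ∈ I → 0 ≤ x → x ≤ n → ∃ m : ℕ, (m : K) = x := by
  intro n
  induction n with
  | zero =>
      intro x hx h0 hn
      exact ⟨0, by simpa using (le_antisymm (by simpa using hn) h0).symm⟩
  | succ n ih =>
      intro x hx h0 hn
      rcases eq_or_lt_of_le h0 with h | h
      · exact ⟨0, by simpa using h⟩
      · have h1 : 1 ≤ x := hd x hx h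
        have hn' : x ≤ (n : K) + 1 := by push_cast at hn; linarith
        obtain ⟨m, hm⟩ := ih (x - 1) (sub_mem hx I.one_mem) (by linarith)
          (by linarith)
        exact ⟨m + 1, by push_cast; linarith⟩

lemma int_of_bounded (I : Subring K) (hd : ∀ r ∈ I, 0 < r → 1 ≤ r)
    (x : K) (hx : x ∈ I) (n : ℕ) (hn : |x| ≤ n) : ∃ m : ℤ, (m : K) = x := by
  rcases le_total 0 x with h | h
  · obtain ⟨m, hm⟩ := nat_of_bounded I hd n x hx h (by rwa [abs_of_nonneg h] at hn)
    exact ⟨m, by exact_mod_cast hm⟩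
  · obtain ⟨m, hm⟩ := nat_of_bounded I hd n (-x) (neg_mem hx) (by linarith)
      (by rwa [abs_of_nonpos h] at hn)
    exact ⟨-m, by push_cast; linarith⟩

/-- The relation "bounded difference" on `K`. -/
def Bdd (a b : K) : Prop := ∃ n : ℕ, |a - b| ≤ n

lemma bdd_refl (a : K) : Bdd a a := ⟨0, by simp⟩

lemma bdd_symm {a b : K} (h : Bdd a b) : Bdd b a := by
  obtain ⟨n, hn⟩ := h
  exact ⟨n, by rwa [abs_sub_comm]⟩

lemma bdd_trans {a b c : K} (h : Bdd a b) (h' : Bdd b c) : Bdd a c := by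
  obtain ⟨n, hn⟩ := h
  obtain ⟨m, hm⟩ := h'
  refine ⟨n + m, ?_⟩
  calc |a - c| ≤ |a - b| + |b - c| := abs_sub_le _ _ _
    _ ≤ (n : K) + m := add_le_add hn hm
    _ = ((n + m : ℕ) : K) := by push_cast; ring

/-- The setoid of bounded difference. -/
def bddSetoid (K : Type*) [Field K] [LinearOrder K] [IsStrictOrderedRing K] : Setoid K :=
  ⟨Bdd, ⟨bdd_refl, bdd_symm, bdd_trans⟩⟩

/-- A representative of the bounded-difference class of `a`. -/
noncomputable def rep (a : K) : K := (Quotient.mk (bddSetoid K) a).out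

lemma bdd_rep (a : K) : Bdd (rep a) a :=
  Quotient.exact (Quotient.out_eq (Quotient.mk (bddSetoid K) a))

lemma rep_eq_of_bdd {a b : K} (h : Bdd a b) : rep a = rep b := by
  unfold rep
  rw [Quotient.sound (s := bddSetoid K) h]

/-- The floor of `a` in an integer part `I`. -/
noncomputable def flr (I : Subring K) (h : I.IsIntegerPart) (a : K) : K :=
  (h.2 a).choose

lemma flr_mem (I : Subring K) (h : I.IsIntegerPart) (a : K) : flr I h a ∈ I :=
  (h.2 a).choose_spec.1

lemma flr_le (I : Subring K) (h : I.IsIntegerPart) (a : K) : flr I h a ≤ a :=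
  (h.2 a).choose_spec.2.1

lemma lt_flr_add_one (I : Subring K) (h : I.IsIntegerPart) (a : K) :
    a < flr I h a + 1 :=
  (h.2 a).choose_spec.2.2

/-- The canonical map from `I` to `J`: move to the floor (in `J`) of the class
representative, then shift by the integer offset. -/
noncomputable def Fval (I J : Subring K) (hI : I.IsIntegerPart) (hJ : J.IsIntegerPart)
    (r : K) : K :=
  flr J hJ (rep r) + (r - flr I hI (rep r))

lemma abs_flr_sub_rep (I : Subring K) (h : I.IsIntegerPart) (a : K) :
    |flr I h a - a| ≤ 1 := by
  have h1 := flr_le I h a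
  have h2 := lt_flr_add_one I h a
  rw [abs_le]; constructor <;> linarith

lemma Fval_bdd (I J : Subring K) (hI : I.IsIntegerPart) (hJ : J.IsIntegerPart) (r : K) :
    Bdd (Fval I J hI hJ r) r := by
  refine ⟨2, ?_⟩
  have h1 := abs_flr_sub_rep J hJ (rep r)
  have h2 := abs_flr_sub_rep I hI (rep r)
  have : Fval I J hI hJ r - r = (flr J hJ (rep r) - rep r) - (flr I hI (rep r) - rep r) := by
    unfold Fval; ring
  rw [this]
  calc |(flr J hJ (rep r) - rep r) - (flr I hI (rep r) - rep r)|
      ≤ |flr J hJ (rep r) - rep r| + |flr I hI (rep r) - rep r| := abs_sub _ _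
    _ ≤ 1 + 1 := add_le_add h1 h2
    _ = ((2 : ℕ) : K) := by norm_num

lemma Fval_mem (I J : Subring K) (hI : I.IsIntegerPart) (hJ : J.IsIntegerPart)
    (r : K) (hr : r ∈ I) : Fval I J hI hJ r ∈ J := by
  obtain ⟨n, hn⟩ := bdd_rep r
  have hx : r - flr I hI (rep r) ∈ I := sub_mem hr (flr_mem I hI (rep r))
  have hb : |r - flr I hI (rep r)| ≤ (n + 1 : ℕ) := by
    have h1 := abs_flr_sub_rep I hI (rep r)
    calc |r - flr I hI (rep r)|
        ≤ |r - rep r| + |rep r - flr I hI (rep r)| := abs_sub_le _ _ _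
      _ ≤ n + 1 := by
          have : |r - rep r| ≤ n := by rwa [abs_sub_comm] at hn
          have : |rep r - flr I hI (rep r)| ≤ 1 := by
            rwa [abs_sub_comm] at h1
          have h1' : |r - rep r| ≤ n := by
            rwa [abs_sub_comm] at hn
          linarith
      _ = ((n + 1 : ℕ) : K) := by push_cast; ring
  obtain ⟨m, hm⟩ := int_of_bounded I hI.1 _ hx (n + 1) hb
  have : Fval I J hI hJ r = flr J hJ (rep r) + (m : K) := by
    unfold Fval; rw [hm]
  rw [this]
  exact add_mem (flr_mem J hJ (rep r)) (intCast_mem J m)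

lemma rep_Fval (I J : Subring K) (hI : I.IsIntegerPart) (hJ : J.IsIntegerPart) (r : K) :
    rep (Fval I J hI hJ r) = rep r :=
  rep_eq_of_bdd (Fval_bdd I J hI hJ r)

lemma Fval_leftInv (I J : Subring K) (hI : I.IsIntegerPart) (hJ : J.IsIntegerPart)
    (r : K) : Fval J I hJ hI (Fval I J hI hJ r) = r := by
  have h := rep_Fval I J hI hJ r
  unfold Fval at h ⊢
  rw [h]
  ring

lemma Fval_strictMono (I J : Subring K) (hI : I.IsIntegerPart) (hJ : J.IsIntegerPart)
    {r r' : K} (h : r < r') : Fval I J hI hJ r < Fval I J hI hJ r' := by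
  by_cases hrep : rep r = rep r'
  · unfold Fval
    rw [hrep]
    linarith
  · by_contra hc
    push_neg at hc
    apply hrep
    apply rep_eq_of_bdd
    obtain ⟨n, hn⟩ := Fval_bdd I J hI hJ r
    obtain ⟨m, hm⟩ := Fval_bdd I J hI hJ r'
    refine ⟨n + m, ?_⟩
    have h1 : Fval I J hI hJ r - r ≤ n := (abs_le.mp hn).2
    have h2 : -(m : K) ≤ Fval I J hI hJ r' - r' := (abs_le.mp hm).1
    have : |r - r'| = r' - r := by rw [abs_sub_comm, abs_of_nonneg (by linarith)]
    rw [this]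
    push_cast
    linarith

end IntPartAux

/-- Any two integer parts of an ordered field are isomorphic as ordered sets,
in particular they have the same cardinality. -/
theorem integer_parts_orderIso {K : Type*} [Field K] [LinearOrder K] [IsStrictOrderedRing K]
    (I₁ I₂ : Subring K) (h₁ : I₁.IsIntegerPart) (h₂ : I₂.IsIntegerPart) :
    Nonempty (I₁ ≃o I₂) ∧ Cardinal.mk I₁ = Cardinal.mk I₂ := by
  open IntPartAux in
  have hmono : StrictMono (fun r : I₁ =>
      (⟨Fval I₁ I₂ h₁ h₂ r, Fval_mem I₁ I₂ h₁ h₂ r r.2⟩ : I₂)) := by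
    intro a b hab
    exact Fval_strictMono I₁ I₂ h₁ h₂ (by exact_mod_cast hab)
  let e : I₁ ≃o I₂ :=
    { toFun := fun r => ⟨Fval I₁ I₂ h₁ h₂ r, Fval_mem I₁ I₂ h₁ h₂ r r.2⟩
      invFun := fun s => ⟨Fval I₂ I₁ h₂ h₁ s, Fval_mem I₂ I₁ h₂ h₁ s s.2⟩
      left_inv := fun r => Subtype.ext (Fval_leftInv I₁ I₂ h₁ h₂ r)
      right_inv := fun s => Subtype.ext (Fval_leftInv I₂ I₁ h₂ h₁ s)
      map_rel_iff' := fun {a b} => hmono.le_iff_le }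
  exact ⟨⟨e⟩, Cardinal.mk_congr e.toEquiv⟩
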